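/- Let K, b be positive integers. For each arm j ∈ {1,...,K}, let p_j ∈ (0,1] and q_j^1, ..., q_j^b ∈ [0,1] with each factor 1 - (1-p_j)(1-q_j^1)···(1-q_j^b) positive. Then ∑_{j=1}^K p_j / (1 - (1-p_j)(1-q_j^1)···(1-q_j^b)) ≤ ∑_{j=1}^K p_j / (p_j + q_j^1 + ··· + q_j^b) + 1. -/

import Mathlib

theorem sum_ratio_le_sum_ratio_add_one (K b : ℕ) (hK : 0 < K) (hb : 0 < b)
    (p : Fin K → ℝ) (q : Fin b → Fin K → ℝ)
    (hp : ∀ j, p j ∈ Set.Ioc (0 : ℝ) 1) (hpsum : ∑ j, p j = 1)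
    (hq : ∀ ℓ j, q ℓ j ∈ Set.Icc (0 : ℝ) 1) (hqsum : ∀ ℓ, ∑ j, q ℓ j = 1)
    (hpos : ∀ j, 0 < 1 - (1 - p j) * ∏ ℓ, (1 - q ℓ j)) :
    ∑ j, p j / (1 - (1 - p j) * ∏ ℓ, (1 - q ℓ j)) ≤
      ∑ j, p j / (p j + ∑ ℓ, q ℓ j) + 1 := by
  have key : ∀ j, p j / (1 - (1 - p j) * ∏ ℓ, (1 - q ℓ j)) ≤
      p j / (p j + ∑ ℓ, q ℓ j) + p j := by
    intro j
    set S : ℝ := p j + ∑ ℓ, q ℓ j with hSdef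
    have hpj := hp j
    have hqsum_nonneg : (0:ℝ) ≤ ∑ ℓ, q ℓ j :=
      Finset.sum_nonneg fun ℓ _ => (hq ℓ j).1
    have hSpos : 0 < S := lt_of_lt_of_le hpj.1 (le_add_of_nonneg_right hqsum_nonneg)
    have h1S : (0:ℝ) < 1 + S := by linarith
    -- product bound via exponential
    have hprodq : ∏ ℓ, (1 - q ℓ j) ≤ Real.exp (-(∑ ℓ, q ℓ j)) := by
      have : Real.exp (-(∑ ℓ, q ℓ j)) = ∏ ℓ, Real.exp (-(q ℓ j)) := by
        rw [← Real.exp_sum, ← Finset.sum_neg_distrib]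
      rw [this]
      refine Finset.prod_le_prod (fun ℓ _ => by linarith [(hq ℓ j).2]) ?_
      intro ℓ _
      linarith [Real.add_one_le_exp (-(q ℓ j))]
    have hprod : (1 - p j) * ∏ ℓ, (1 - q ℓ j) ≤ Real.exp (-S) := by
      have h2 : (1 - p j) ≤ Real.exp (-(p j)) := by
        linarith [Real.add_one_le_exp (-(p j))]
      have hprodq_nonneg : (0:ℝ) ≤ ∏ ℓ, (1 - q ℓ j) :=
        Finset.prod_nonneg fun ℓ _ => by linarith [(hq ℓ j).2]
      calc (1 - p j) * ∏ ℓ, (1 - q ℓ j)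
          ≤ Real.exp (-(p j)) * Real.exp (-(∑ ℓ, q ℓ j)) := by
            apply mul_le_mul h2 hprodq hprodq_nonneg (Real.exp_nonneg _)
        _ = Real.exp (-S) := by rw [← Real.exp_add, hSdef]; congr 1; ring
    have hexp : Real.exp (-S) ≤ 1 / (1 + S) := by
      rw [Real.exp_neg, inv_eq_one_div, div_le_div_iff₀ (Real.exp_pos S) h1S]
      nlinarith [Real.add_one_le_exp S, Real.exp_pos S]
    have hD : S / (1 + S) ≤ 1 - (1 - p j) * ∏ ℓ, (1 - q ℓ j) := by
      have : S / (1 + S) = 1 - 1 / (1 + S) := by field_simp; ring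
      rw [this]
      linarith
    have hDS : 0 < S / (1 + S) := div_pos hSpos h1S
    calc p j / (1 - (1 - p j) * ∏ ℓ, (1 - q ℓ j))
        ≤ p j / (S / (1 + S)) := by
          apply div_le_div_of_nonneg_left hpj.1.le hDS hD
      _ = p j / S + p j := by field_simp
  calc ∑ j, p j / (1 - (1 - p j) * ∏ ℓ, (1 - q ℓ j))
      ≤ ∑ j, (p j / (p j + ∑ ℓ, q ℓ j) + p j) :=
        Finset.sum_le_sum fun j _ => key j
    _ = ∑ j, p j / (p j + ∑ ℓ, q ℓ j) + 1 := by
        rw [Finset.sum_add_distrib, hpsum]
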